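/- Let δ ∈ ℝ and define k : (0, π) → ℝ by k(θ) = cos θ + δ·( (1/2)·cos θ·log( (1 + cos θ)/(1 − cos θ) ) − 1 ). Then for all θ ∈ (0, π): (i) k''(θ) = −k(θ) + δ/sin²θ; (ii) cot θ · k'(θ) = −k(θ) − δ/sin²θ; and consequently (iii) ( k''(θ) )² + ( cot θ · k'(θ) )² − 2·( k(θ) )² = 2δ²/sin⁴θ, which is nonzero for every θ ∈ (0, π) whenever δ ≠ 0. -/

import Mathlib

open Real Set Filter

noncomputable def Lf (x : ℝ) : ℝ := Real.log (1 + Real.cos x) - Real.log (1 - Real.cos x)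

noncomputable def kf (δ x : ℝ) : ℝ := Real.cos x + δ * ((1/2) * Real.cos x * Lf x - 1)

noncomputable def g1 (δ x : ℝ) : ℝ :=
  -Real.sin x + δ * (-(1/2) * Real.sin x * Lf x - Real.cos x / Real.sin x)

lemma aux_basic {x : ℝ} (hx : x ∈ Set.Ioo (0:ℝ) Real.pi) :
    0 < Real.sin x ∧ 0 < 1 + Real.cos x ∧ 0 < 1 - Real.cos x := by
  obtain ⟨h1, h2⟩ := hx
  have hs : 0 < Real.sin x := Real.sin_pos_of_pos_of_lt_pi h1 h2
  have hpy := Real.sin_sq_add_cos_sq x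
  exact ⟨hs, by nlinarith, by nlinarith⟩

lemma aux_hasDeriv_Lf {x : ℝ} (hx : x ∈ Set.Ioo (0:ℝ) Real.pi) :
    HasDerivAt Lf (-2 / Real.sin x) x := by
  obtain ⟨hs, h1, h2⟩ := aux_basic hx
  have hc := Real.hasDerivAt_cos x
  have hl1 : HasDerivAt (fun y => Real.log (1 + Real.cos y))
      (-Real.sin x / (1 + Real.cos x)) x := ((hc.const_add 1).log h1.ne')
  have hl2 : HasDerivAt (fun y => Real.log (1 - Real.cos y))
      (Real.sin x / (1 - Real.cos x)) x := by
    have := ((hc.const_sub 1)).log h2.ne'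
    simpa using this
  have h := hl1.sub hl2
  refine h.congr_deriv ?_
  have hpy := Real.sin_sq_add_cos_sq x
  field_simp
  nlinarith [hpy]

lemma aux_hasDeriv_kf (δ : ℝ) {x : ℝ} (hx : x ∈ Set.Ioo (0:ℝ) Real.pi) :
    HasDerivAt (kf δ) (g1 δ x) x := by
  obtain ⟨hs, h1, h2⟩ := aux_basic hx
  have hc := Real.hasDerivAt_cos x
  have hL := aux_hasDeriv_Lf hx
  have hprod : HasDerivAt (fun y => (1/2 : ℝ) * Real.cos y * Lf y)
      ((1/2) * (-Real.sin x) * Lf x + (1/2) * Real.cos x * (-2 / Real.sin x)) x :=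
    (hc.const_mul (1/2 : ℝ)).mul hL
  have h := hc.add (((hprod.sub_const 1)).const_mul δ)
  have he : kf δ = fun y => Real.cos y + δ * ((1/2) * Real.cos y * Lf y - 1) := rfl
  rw [he]
  refine h.congr_deriv ?_
  unfold g1
  field_simp
  ring

lemma aux_hasDeriv_g1 (δ : ℝ) {x : ℝ} (hx : x ∈ Set.Ioo (0:ℝ) Real.pi) :
    HasDerivAt (g1 δ)
      (-Real.cos x + δ * (-(1/2) * Real.cos x * Lf x + 1 + 1 / Real.sin x ^ 2)) x := by
  obtain ⟨hs, h1, h2⟩ := aux_basic hx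
  have hc := Real.hasDerivAt_cos x
  have hsin := Real.hasDerivAt_sin x
  have hL := aux_hasDeriv_Lf hx
  have hprod : HasDerivAt (fun y => -(1/2 : ℝ) * Real.sin y * Lf y)
      (-(1/2) * Real.cos x * Lf x + -(1/2) * Real.sin x * (-2 / Real.sin x)) x :=
    (hsin.const_mul (-(1/2) : ℝ)).mul hL
  have hcot : HasDerivAt (fun y => Real.cos y / Real.sin y)
      ((-Real.sin x * Real.sin x - Real.cos x * Real.cos x) / Real.sin x ^ 2) x :=
    hc.div hsin hs.ne'
  have h := hsin.neg.add ((hprod.sub hcot).const_mul δ)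
  have he : g1 δ = fun y => -Real.sin y + δ * (-(1/2) * Real.sin y * Lf y - Real.cos y / Real.sin y) := rfl
  rw [he]
  refine h.congr_deriv ?_
  have hpy := Real.sin_sq_add_cos_sq x
  rw [show -Real.sin x * Real.sin x - Real.cos x * Real.cos x = -1 by nlinarith]
  field_simp
  ring

/-- For the `m = 0` kernel mode `k(θ) = cos θ + δ·((1/2)·cos θ·log((1+cos θ)/(1−cos θ)) − 1)`
of `Δ̂ + 2` on the sphere, on `(0, π)` one has `k'' = −k + δ/sin²θ`,
`cot θ · k' = −k − δ/sin²θ`, hence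
`(k'')² + (cot θ · k')² − 2k² = 2δ²/sin⁴θ`, which is nonzero whenever `δ ≠ 0`. -/
theorem stmt_5 (δ : ℝ) (k : ℝ → ℝ)
    (hk : ∀ θ ∈ Set.Ioo (0 : ℝ) Real.pi,
      k θ = Real.cos θ
        + δ * ((1 / 2) * Real.cos θ
            * Real.log ((1 + Real.cos θ) / (1 - Real.cos θ)) - 1)) :
    ∀ θ ∈ Set.Ioo (0 : ℝ) Real.pi,
      deriv (deriv k) θ = -k θ + δ / Real.sin θ ^ 2 ∧
      (Real.cos θ / Real.sin θ) * deriv k θ = -k θ - δ / Real.sin θ ^ 2 ∧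
      (deriv (deriv k) θ) ^ 2 + ((Real.cos θ / Real.sin θ) * deriv k θ) ^ 2
          - 2 * (k θ) ^ 2 = 2 * δ ^ 2 / Real.sin θ ^ 4 ∧
      (δ ≠ 0 →
        (deriv (deriv k) θ) ^ 2 + ((Real.cos θ / Real.sin θ) * deriv k θ) ^ 2
          - 2 * (k θ) ^ 2 ≠ 0) := by
  have hkeq : ∀ x ∈ Set.Ioo (0:ℝ) Real.pi, k x = kf δ x := by
    intro x hx
    obtain ⟨hs', h1', h2'⟩ := aux_basic hx
    rw [hk x hx]
    unfold kf Lf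
    rw [Real.log_div h1'.ne' h2'.ne']
  have hd1 : ∀ x ∈ Set.Ioo (0:ℝ) Real.pi, deriv k x = g1 δ x := by
    intro x hx
    have hevx : k =ᶠ[nhds x] kf δ := Filter.eventually_of_mem (isOpen_Ioo.mem_nhds hx) hkeq
    exact ((aux_hasDeriv_kf δ hx).congr_of_eventuallyEq hevx).deriv
  intro θ hθ
  obtain ⟨hs, h1, h2⟩ := aux_basic hθ
  have hev2 : deriv k =ᶠ[nhds θ] g1 δ := Filter.eventually_of_mem (isOpen_Ioo.mem_nhds hθ) hd1
  have hd2 : deriv (deriv k) θ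
      = -Real.cos θ + δ * (-(1/2) * Real.cos θ * Lf θ + 1 + 1 / Real.sin θ ^ 2) :=
    ((aux_hasDeriv_g1 δ hθ).congr_of_eventuallyEq hev2).deriv
  have hdk : deriv k θ = g1 δ θ := hd1 θ hθ
  have hkθ : k θ = kf δ θ := hkeq θ hθ
  have hpy := Real.sin_sq_add_cos_sq θ
  have hi : deriv (deriv k) θ = -k θ + δ / Real.sin θ ^ 2 := by
    rw [hd2, hkθ]; unfold kf; field_simp; ring
  have hii : (Real.cos θ / Real.sin θ) * deriv k θ = -k θ - δ / Real.sin θ ^ 2 := by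
    rw [hdk, hkθ]; unfold g1 kf
    field_simp
    linear_combination (-2*δ) * hpy
  have hiii : (deriv (deriv k) θ) ^ 2 + ((Real.cos θ / Real.sin θ) * deriv k θ) ^ 2
      - 2 * (k θ) ^ 2 = 2 * δ ^ 2 / Real.sin θ ^ 4 := by
    rw [hi, hii]; field_simp; ring
  refine ⟨hi, hii, hiii, fun hδ => ?_⟩
  rw [hiii]
  positivity
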